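/- arXiv:2205.01758 — 3 statements merged into one kernel-verified Lean document; each statement's English description precedes it below -/
import Mathlib

section
/- Given four points q₀, q₁, q₂, q₃ ∈ ℝ³, let P ∈ M₃(ℝ) be the matrix with columns q₁−q₀, q₂−q₀, q₃−q₀, assumed invertible; let s = (1,1,1)ᵀ ∈ ℝ³, let A ∈ M_{3×4}(ℝ) be the block matrix A = [−P⁻ᵀ s | P⁻ᵀ], and write G = P⁻¹P⁻ᵀ. Then every absolute row sum of the 4×4 Gram matrix AᵀA is at most 6 times the maximum absolute row sum of G: for every i ∈ {0,1,2,3}, Σ_{j=0}^{3} |(AᵀA)ᵢⱼ| ≤ 6·max_{k∈{1,2,3}} Σ_{l=1}^{3} |G_{kl}|. -/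
open Matrix

/-- The edge-displacement matrix of the tetrahedron: columns q₁−q₀, q₂−q₀, q₃−q₀. -/
noncomputable def Pmat (q0 q1 q2 q3 : Fin 3 → ℝ) : Matrix (Fin 3) (Fin 3) ℝ :=
  Matrix.of fun i j => ![q1, q2, q3] j i - q0 i

/-- The spatial differential operator A = [−P⁻ᵀ s | P⁻ᵀ] with s = (1,1,1)ᵀ. -/
noncomputable def Amat (q0 q1 q2 q3 : Fin 3 → ℝ) : Matrix (Fin 3) (Fin 4) ℝ :=
  Matrix.of fun i j =>
    Fin.cases (-((((Pmat q0 q1 q2 q3)⁻¹)ᵀ *ᵥ fun _ => (1 : ℝ)) i))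
      (fun j' => ((Pmat q0 q1 q2 q3)⁻¹)ᵀ i j') j

/-- Every absolute row sum of the Gram matrix AᵀA is at most 6 times the maximum absolute
row sum of G = P⁻¹P⁻ᵀ. -/
theorem gram_abs_row_sum_le {q0 q1 q2 q3 : Fin 3 → ℝ}
    (hP : IsUnit (Pmat q0 q1 q2 q3).det) (i : Fin 4) :
    ∑ j, |((Amat q0 q1 q2 q3)ᵀ * Amat q0 q1 q2 q3) i j|
      ≤ 6 * ⨆ k : Fin 3,
          ∑ l, |((Pmat q0 q1 q2 q3)⁻¹ * ((Pmat q0 q1 q2 q3)⁻¹)ᵀ) k l| := by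
  classical
  set B : Matrix (Fin 3) (Fin 3) ℝ := ((Pmat q0 q1 q2 q3)⁻¹)ᵀ with hB
  set G : Matrix (Fin 3) (Fin 3) ℝ :=
    (Pmat q0 q1 q2 q3)⁻¹ * ((Pmat q0 q1 q2 q3)⁻¹)ᵀ with hG
  have hGdef : ∀ k l, G k l = ∑ t, B t k * B t l := by
    intro k l
    simp [hG, hB, Matrix.mul_apply, Matrix.transpose_apply]
  have hA0 : ∀ k, Amat q0 q1 q2 q3 k 0 = -(∑ t, B k t) := by
    intro k
    simp [Amat, hB, Matrix.mulVec, dotProduct]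
  have hAs : ∀ (k : Fin 3) (j' : Fin 3), Amat q0 q1 q2 q3 k j'.succ = B k j' := by
    intro k j'
    simp [Amat, hB]
  set M : ℝ := ⨆ k : Fin 3, ∑ l, |G k l| with hM
  have hrM : ∀ k : Fin 3, (∑ l, |G k l|) ≤ M :=
    fun k => le_ciSup (f := fun k : Fin 3 => ∑ l, |G k l|)
      (Set.Finite.bddAbove (Set.finite_range _)) k
  have hM0 : (0:ℝ) ≤ M := le_trans (by positivity) (hrM 0)
  have e00 : ((Amat q0 q1 q2 q3)ᵀ * Amat q0 q1 q2 q3) 0 0 = ∑ t, ∑ u, G t u := by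
    simp only [Matrix.mul_apply, Matrix.transpose_apply, hA0, hGdef,
      Fin.sum_univ_three]
    ring
  have e0s : ∀ l' : Fin 3,
      ((Amat q0 q1 q2 q3)ᵀ * Amat q0 q1 q2 q3) 0 l'.succ = -∑ t, G t l' := by
    intro l'
    simp only [Matrix.mul_apply, Matrix.transpose_apply, hA0, hAs, hGdef,
      Fin.sum_univ_three]
    ring
  have es0 : ∀ j' : Fin 3,
      ((Amat q0 q1 q2 q3)ᵀ * Amat q0 q1 q2 q3) j'.succ 0 = -∑ t, G j' t := by
    intro j'
    simp only [Matrix.mul_apply, Matrix.transpose_apply, hA0, hAs, hGdef,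
      Fin.sum_univ_three]
    ring
  have ess : ∀ j' l' : Fin 3,
      ((Amat q0 q1 q2 q3)ᵀ * Amat q0 q1 q2 q3) j'.succ l'.succ = G j' l' := by
    intro j' l'
    simp only [Matrix.mul_apply, Matrix.transpose_apply, hAs, hGdef]
  induction i using Fin.cases with
  | zero =>
    rw [Fin.sum_univ_succ]
    have h1 : |((Amat q0 q1 q2 q3)ᵀ * Amat q0 q1 q2 q3) 0 0| ≤ ∑ t, ∑ u, |G t u| := by
      rw [e00]
      calc |∑ t, ∑ u, G t u| ≤ ∑ t, |∑ u, G t u| := Finset.abs_sum_le_sum_abs _ _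
        _ ≤ ∑ t, ∑ u, |G t u| :=
          Finset.sum_le_sum fun t _ => Finset.abs_sum_le_sum_abs _ _
    have h2 : ∑ l' : Fin 3, |((Amat q0 q1 q2 q3)ᵀ * Amat q0 q1 q2 q3) 0 l'.succ|
        ≤ ∑ t, ∑ u, |G t u| := by
      rw [Finset.sum_comm]
      refine Finset.sum_le_sum fun l' _ => ?_
      rw [e0s l', abs_neg]
      exact Finset.abs_sum_le_sum_abs _ _
    have h3 : (∑ t, ∑ u, |G t u|) ≤ 3 * M := by
      calc ∑ t : Fin 3, ∑ u, |G t u| ≤ ∑ t : Fin 3, M := Finset.sum_le_sum fun t _ => hrM t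
        _ = 3 * M := by rw [Fin.sum_univ_three]; ring
    linarith
  | succ j' =>
    rw [Fin.sum_univ_succ]
    have h1 : |((Amat q0 q1 q2 q3)ᵀ * Amat q0 q1 q2 q3) j'.succ 0| ≤ M := by
      rw [es0 j', abs_neg]
      exact le_trans (Finset.abs_sum_le_sum_abs _ _) (hrM j')
    have h2 : ∑ l' : Fin 3, |((Amat q0 q1 q2 q3)ᵀ * Amat q0 q1 q2 q3) j'.succ l'.succ|
        ≤ M := by
      calc ∑ l' : Fin 3, |((Amat q0 q1 q2 q3)ᵀ * Amat q0 q1 q2 q3) j'.succ l'.succ|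
          = ∑ l', |G j' l'| := by simp only [ess]
        _ ≤ M := hrM j'
    linarith
end

section
/- Given four points q₀, q₁, q₂, q₃ ∈ ℝ³, let P ∈ M₃(ℝ) be the matrix with columns q₁−q₀, q₂−q₀, q₃−q₀, assumed invertible; let s = (1,1,1)ᵀ ∈ ℝ³, let A ∈ M_{3×4}(ℝ) be the block matrix A = [−P⁻ᵀ s | P⁻ᵀ], and write G = P⁻¹P⁻ᵀ. Let ρ, μ, V, h > 0 and set L = μV·AᵀA ∈ M₄(ℝ). If ρ/(4h²μ) > 6·‖G‖_∞ (where ‖G‖_∞ = max_k Σ_l |G_{kl}|), then the diagonal mass entries strictly dominate the scaled absolute row sums of L: for every row i ∈ {0,1,2,3}, ρV/(4h²) > Σ_{j=0}^{3} |L_{ij}|. -/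
open Matrix

/-- If ρ/(4h²μ) > 6‖G‖_∞ with G = P⁻¹P⁻ᵀ, then the mass diagonal ρV/(4h²) strictly
dominates every absolute row sum of L = μV·AᵀA. -/
theorem mass_dominates_row_sums {q0 q1 q2 q3 : Fin 3 → ℝ}
    (hP : IsUnit (Pmat q0 q1 q2 q3).det)
    (ρ μ V h : ℝ) (hρ : 0 < ρ) (hμ : 0 < μ) (hV : 0 < V) (hh : 0 < h)
    (hcond : 6 * (⨆ k : Fin 3,
        ∑ l, |((Pmat q0 q1 q2 q3)⁻¹ * ((Pmat q0 q1 q2 q3)⁻¹)ᵀ) k l|)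
      < ρ / (4 * h ^ 2 * μ)) :
    ∀ i : Fin 4,
      ∑ j, |((μ * V) • ((Amat q0 q1 q2 q3)ᵀ * Amat q0 q1 q2 q3)) i j|
        < ρ * V / (4 * h ^ 2) := by
  intro i
  set B : Matrix (Fin 3) (Fin 3) ℝ := ((Pmat q0 q1 q2 q3)⁻¹)ᵀ with hB
  set G : Matrix (Fin 3) (Fin 3) ℝ :=
    (Pmat q0 q1 q2 q3)⁻¹ * ((Pmat q0 q1 q2 q3)⁻¹)ᵀ with hG
  set S : ℝ := ⨆ k : Fin 3, ∑ l, |G k l| with hS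
  -- basic facts about S
  have hSle : ∀ k : Fin 3, ∑ l, |G k l| ≤ S := fun k =>
    le_ciSup (f := fun k : Fin 3 => ∑ l, |G k l|) (Set.Finite.bddAbove (Set.finite_range _)) k
  have hS0 : 0 ≤ S :=
    le_trans (Finset.sum_nonneg fun l _ => abs_nonneg _) (hSle 0)
  -- entries of A
  have hA0 : ∀ x : Fin 3, Amat q0 q1 q2 q3 x 0 = -∑ k, B x k := by
    intro x
    simp [Amat, Matrix.mulVec, dotProduct, hB]
  have hAs : ∀ (x : Fin 3) (j : Fin 3),
      Amat q0 q1 q2 q3 x j.succ = B x j := by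
    intro x j
    simp [Amat, hB]
  -- B ᵀ B = G entrywise
  have hGB : ∀ k l, ∑ x, B x k * B x l = G k l := by
    intro k l
    simp [hG, hB, Matrix.mul_apply, Matrix.transpose_apply]
  set M : Matrix (Fin 4) (Fin 4) ℝ :=
    (Amat q0 q1 q2 q3)ᵀ * Amat q0 q1 q2 q3 with hM
  have hM00 : M 0 0 = ∑ k, ∑ l, G k l := by
    rw [hM, Matrix.mul_apply]
    simp only [Matrix.transpose_apply, hA0]
    rw [show (∑ x, (-∑ k, B x k) * (-∑ k, B x k))
        = ∑ x, ∑ k, ∑ l, B x k * B x l by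
      refine Finset.sum_congr rfl fun x _ => ?_
      rw [neg_mul_neg, Finset.sum_mul_sum]]
    rw [Finset.sum_comm]
    refine Finset.sum_congr rfl fun k _ => ?_
    rw [Finset.sum_comm]
    exact Finset.sum_congr rfl fun l _ => hGB k l
  have hM0s : ∀ l : Fin 3, M 0 l.succ = -∑ k, G k l := by
    intro l
    rw [hM, Matrix.mul_apply]
    simp only [Matrix.transpose_apply, hA0, hAs]
    rw [show (∑ x, (-∑ k, B x k) * B x l) = -∑ x, ∑ k, B x k * B x l by
      rw [← Finset.sum_neg_distrib]
      exact Finset.sum_congr rfl fun x _ => by rw [neg_mul, Finset.sum_mul]]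
    rw [Finset.sum_comm]
    exact congrArg Neg.neg (Finset.sum_congr rfl fun k _ => hGB k l)
  have hMs0 : ∀ k : Fin 3, M k.succ 0 = -∑ l, G k l := by
    intro k
    rw [hM, Matrix.mul_apply]
    simp only [Matrix.transpose_apply, hA0, hAs]
    rw [show (∑ x, B x k * (-∑ l, B x l)) = -∑ x, ∑ l, B x k * B x l by
      rw [← Finset.sum_neg_distrib]
      exact Finset.sum_congr rfl fun x _ => by rw [mul_neg, Finset.mul_sum]]
    rw [Finset.sum_comm]
    exact congrArg Neg.neg (Finset.sum_congr rfl fun l _ => hGB k l)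
  have hMss : ∀ k l : Fin 3, M k.succ l.succ = G k l := by
    intro k l
    rw [hM, Matrix.mul_apply]
    simp only [Matrix.transpose_apply, hAs]
    exact hGB k l
  -- row sum bound : each row sum of |M| is ≤ 6 S
  have hrow : ∑ j, |M i j| ≤ 6 * S := by
    induction i using Fin.cases with
    | zero =>
      rw [Fin.sum_univ_succ]
      simp only [hM00, hM0s, abs_neg]
      have h1 : |∑ k, ∑ l, G k l| ≤ ∑ k : Fin 3, ∑ l, |G k l| :=
        le_trans (Finset.abs_sum_le_sum_abs _ _)
          (Finset.sum_le_sum fun k _ => Finset.abs_sum_le_sum_abs _ _)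
      have h2 : ∑ l : Fin 3, |∑ k, G k l| ≤ ∑ l : Fin 3, ∑ k, |G k l| :=
        Finset.sum_le_sum fun l _ => Finset.abs_sum_le_sum_abs _ _
      have h3 : (∑ k : Fin 3, ∑ l, |G k l|) ≤ 3 * S := by
        calc (∑ k : Fin 3, ∑ l, |G k l|) ≤ ∑ _k : Fin 3, S :=
              Finset.sum_le_sum fun k _ => hSle k
          _ = 3 * S := by simp
      have h4 : (∑ l : Fin 3, ∑ k, |G k l|) = ∑ k : Fin 3, ∑ l, |G k l| :=
        Finset.sum_comm
      linarith
    | succ k =>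
      rw [Fin.sum_univ_succ]
      simp only [hMs0, hMss, abs_neg]
      have h1 : |∑ l, G k l| ≤ ∑ l, |G k l| := Finset.abs_sum_le_sum_abs _ _
      have h2 := hSle k
      linarith
  -- conclude
  have hμV : 0 < μ * V := mul_pos hμ hV
  have hsum : ∑ j, |((μ * V) • M) i j| = (μ * V) * ∑ j, |M i j| := by
    rw [Finset.mul_sum]
    refine Finset.sum_congr rfl fun j _ => ?_
    rw [Matrix.smul_apply, smul_eq_mul, abs_mul, abs_of_pos hμV]
  rw [hsum]
  have hkey : (μ * V) * ∑ j, |M i j| < (μ * V) * (ρ / (4 * h ^ 2 * μ)) := by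
    refine mul_lt_mul_of_pos_left (lt_of_le_of_lt hrow hcond) hμV
  refine lt_of_lt_of_le hkey (le_of_eq ?_)
  field_simp
end

section
/- (Proposition 1, single tetrahedron.) Given four points q₀, q₁, q₂, q₃ ∈ ℝ³, let P ∈ M₃(ℝ) be the matrix with columns q₁−q₀, q₂−q₀, q₃−q₀, assumed invertible; let s = (1,1,1)ᵀ ∈ ℝ³, and let A ∈ M_{3×4}(ℝ) be the block matrix A = [−P⁻ᵀ s | P⁻ᵀ]. Let ρ, μ, V, h > 0, set L = μV·AᵀA and M = (ρV/4)·I₄. If h² < ρ·λ_min(PᵀP)/(24√3·μ), where λ_min(PᵀP) is the smallest eigenvalue of PᵀP, then for every fixed f ∈ ℝ⁴ and every initial vector v⁰ ∈ ℝ⁴, the fixed-force Jacobi iteration M v^{k+1} = f − h²L v^k converges, and its limit is the unique solution v* of (M + h²L) v* = f. -/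
open Matrix Filter Topology

lemma spectral_lb {n : Type*} [Fintype n] [DecidableEq n] [Nonempty n]
    {H : Matrix n n ℝ} (hH : H.IsHermitian) (x : EuclideanSpace ℝ n) :
    (⨅ i, hH.eigenvalues i) * ‖x‖ ^ 2 ≤ (x : n → ℝ) ⬝ᵥ (H *ᵥ x) := by
  set b := hH.eigenvectorBasis with hb
  set lam := fun i => hH.eigenvalues i
  have hrepr : ∀ (y : EuclideanSpace ℝ n) (i : n), b.repr y i = (b i : n → ℝ) ⬝ᵥ y := by
    intro y i
    rw [b.repr_apply_apply]
    rw [PiLp.inner_apply]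
    simp [RCLike.inner_apply, dotProduct, mul_comm]
  have hinner : ∀ y z : EuclideanSpace ℝ n, (y : n → ℝ) ⬝ᵥ z = ∑ i, b.repr y i * b.repr z i := by
    intro y z
    have h1 : (inner ℝ y z) = inner ℝ (b.repr y) (b.repr z) := (b.repr.inner_map_map y z).symm
    have h2 : (inner ℝ y z) = (y : n → ℝ) ⬝ᵥ z := by
      rw [PiLp.inner_apply]; simp [RCLike.inner_apply, dotProduct, mul_comm]
    have h3 : (inner ℝ (b.repr y) (b.repr z) : ℝ) = ∑ i, b.repr y i * b.repr z i := by
      rw [PiLp.inner_apply]; simp [RCLike.inner_apply, mul_comm]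
    rw [← h2, h1, h3]
  have hHx : ∀ i, b.repr (WithLp.toLp 2 (H *ᵥ x)) i = lam i * b.repr x i := by
    intro i
    rw [hrepr, hrepr]
    simp only [WithLp.ofLp_toLp]
    have hkey : H *ᵥ (b i : n → ℝ) = lam i • (b i : n → ℝ) := hH.mulVec_eigenvectorBasis i
    have hsym : (b i : n → ℝ) ⬝ᵥ (H *ᵥ x) = (H *ᵥ (b i : n → ℝ)) ⬝ᵥ x := by
      rw [dotProduct_mulVec, ← vecMul_transpose]
      congr 1
      have hT : Hᵀ = H := by
        have := hH.eq
        rw [← conjTranspose_eq_transpose_of_trivial]; exact this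
      rw [hT]
    rw [hsym, hkey, smul_dotProduct]
    simp
  have hnorm : ‖x‖^2 = ∑ i, b.repr x i ^ 2 := by
    have h1 : ‖x‖^2 = (x : n → ℝ) ⬝ᵥ x := by
      rw [← real_inner_self_eq_norm_sq]
      rw [PiLp.inner_apply]; simp [RCLike.inner_apply, dotProduct, sq]
    rw [h1, hinner]
    simp [sq]
  have hix := hinner x (WithLp.toLp 2 (H *ᵥ x))
  simp only [WithLp.ofLp_toLp] at hix
  rw [hix, hnorm, Finset.mul_sum]
  apply Finset.sum_le_sum
  intro i _
  rw [hHx i]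
  have h1 : (⨅ j, hH.eigenvalues j) ≤ lam i := ciInf_le (Finite.bddBelow_range _) i
  nlinarith [sq_nonneg (b.repr x i)]



-- positivity of inf of eigenvalues of PᵀP for invertible P
lemma lam_pos {n : Type*} [Fintype n] [DecidableEq n] [Nonempty n]
    {P : Matrix n n ℝ} (hP : IsUnit P.det) (hH : (Pᵀ * P).IsHermitian) :
    0 < ⨅ i, hH.eigenvalues i := by
  have hpd : (Pᵀ * P).PosDef := by
    refine Matrix.PosDef.of_dotProduct_mulVec_pos hH fun x hx => ?_
    have hPx : P *ᵥ x ≠ 0 := by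
      intro hc
      exact hx (Matrix.mulVec_injective_iff_isUnit.mpr (isUnit_iff_isUnit_det P |>.mpr hP)
        (by simpa using hc))
    have : star x ⬝ᵥ (Pᵀ * P) *ᵥ x = (P *ᵥ x) ⬝ᵥ (P *ᵥ x) := by
      rw [← mulVec_mulVec, dotProduct_mulVec, vecMul_transpose]
      simp
    rw [this]
    have h1 : P *ᵥ x ⬝ᵥ P *ᵥ x ≠ 0 := fun hc => hPx (dotProduct_self_eq_zero.mp hc)
    have h2 : (0:ℝ) ≤ P *ᵥ x ⬝ᵥ P *ᵥ x := by
      simp only [dotProduct]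
      exact Finset.sum_nonneg fun i _ => mul_self_nonneg _
    simpa using lt_of_le_of_ne h2 (Ne.symm h1)
  obtain ⟨i0, hi0⟩ := Finite.exists_min hH.eigenvalues
  have : (⨅ i, hH.eigenvalues i) = hH.eigenvalues i0 :=
    le_antisymm (ciInf_le (Finite.bddBelow_range _) i0) (le_ciInf hi0)
  rw [this]
  exact hpd.eigenvalues_pos i0

lemma inv_bound {n : Type*} [Fintype n] [DecidableEq n] [Nonempty n]
    {P : Matrix n n ℝ} (hP : IsUnit P.det) (hH : (Pᵀ * P).IsHermitian)
    (w : EuclideanSpace ℝ n) :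
    ‖(WithLp.toLp 2 ((Pᵀ * P)⁻¹ *ᵥ w))‖ ≤ (⨅ i, hH.eigenvalues i)⁻¹ * ‖w‖ := by
  set lam := ⨅ i, hH.eigenvalues i with hlam
  have hlp : 0 < lam := lam_pos hP hH
  have hdet : IsUnit (Pᵀ * P).det := by
    rw [det_mul, det_transpose]; exact hP.mul hP
  set x : EuclideanSpace ℝ n := (WithLp.toLp 2 ((Pᵀ * P)⁻¹ *ᵥ w)) with hx
  have hw : (Pᵀ * P) *ᵥ (x : n → ℝ) = w := by
    rw [hx, WithLp.ofLp_toLp, mulVec_mulVec, mul_nonsing_inv _ hdet, one_mulVec]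
  have key : lam * ‖x‖^2 ≤ ‖x‖ * ‖w‖ := by
    calc lam * ‖x‖^2 ≤ (x : n → ℝ) ⬝ᵥ ((Pᵀ * P) *ᵥ x) := spectral_lb hH x
    _ = inner ℝ x (WithLp.toLp 2 ((Pᵀ * P) *ᵥ x)) := by
        rw [PiLp.inner_apply]; simp [RCLike.inner_apply, dotProduct, mul_comm]
    _ ≤ ‖x‖ * ‖(WithLp.toLp 2 ((Pᵀ * P) *ᵥ x))‖ := real_inner_le_norm _ _
    _ = ‖x‖ * ‖w‖ := by rw [show (WithLp.toLp 2 ((Pᵀ * P) *ᵥ x)) = w from by rw [hw]]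
  rcases eq_or_lt_of_le (norm_nonneg x) with h0 | h0
  · rw [← h0]; positivity
  · have : lam * ‖x‖ ≤ ‖w‖ := by
      have := mul_le_mul_of_nonneg_right key (le_of_lt (inv_pos.mpr h0))
      calc lam * ‖x‖ = lam * ‖x‖^2 * ‖x‖⁻¹ := by field_simp [h0.ne']
      _ ≤ ‖x‖ * ‖w‖ * ‖x‖⁻¹ := this
      _ = ‖w‖ := by field_simp [h0.ne']
    calc ‖x‖ = lam⁻¹ * (lam * ‖x‖) := by field_simp
    _ ≤ lam⁻¹ * ‖w‖ := by
        apply mul_le_mul_of_nonneg_left this (le_of_lt (inv_pos.mpr hlp))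




def Cmat : Matrix (Fin 3) (Fin 4) ℝ :=
  Matrix.of fun i j => Fin.cases (-1 : ℝ) (fun j' => if i = j' then 1 else 0) j

lemma norm_sq_E (m : ℕ) (x : EuclideanSpace ℝ (Fin m)) : ‖x‖^2 = ∑ i, x i ^2 := by
  rw [EuclideanSpace.norm_eq, Real.sq_sqrt (by positivity)]
  simp [sq_abs]

lemma Amat_eq (q0 q1 q2 q3 : Fin 3 → ℝ) :
    Amat q0 q1 q2 q3 = ((Pmat q0 q1 q2 q3)⁻¹)ᵀ * Cmat := by
  ext i j
  rw [Amat, Cmat]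
  induction j using Fin.cases with
  | zero =>
    simp [Matrix.mul_apply, mulVec, dotProduct, Fin.sum_univ_three, Fin.sum_univ_four]
  | succ j' =>
    simp only [Matrix.of_apply, Fin.cases_succ, Matrix.mul_apply, Fin.sum_univ_three]
    fin_cases j' <;> simp

lemma AtA_eq (q0 q1 q2 q3 : Fin 3 → ℝ) :
    (Amat q0 q1 q2 q3)ᵀ * Amat q0 q1 q2 q3
      = Cmatᵀ * ((Pmat q0 q1 q2 q3)ᵀ * Pmat q0 q1 q2 q3)⁻¹ * Cmat := by
  rw [Amat_eq, transpose_mul, transpose_transpose]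
  rw [Matrix.mul_inv_rev, transpose_nonsing_inv]
  simp only [Matrix.mul_assoc]

lemma Cu_bound (u : EuclideanSpace ℝ (Fin 4)) :
    ‖(WithLp.toLp 2 (Cmat *ᵥ u))‖ ≤ 2 * ‖u‖ := by
  have h := norm_sq_E 3 (WithLp.toLp 2 (Cmat *ᵥ u))
  have h4 := norm_sq_E 4 u
  apply le_of_pow_le_pow_left₀ two_ne_zero (by positivity)
  rw [mul_pow, h, h4]
  have hcu : ∀ i : Fin 3, (Cmat *ᵥ (u : Fin 4 → ℝ)) i = u i.succ - u 0 := by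
    intro i
    simp [Cmat, mulVec, dotProduct, Fin.sum_univ_four, Fin.sum_univ_succ]
    fin_cases i <;> norm_num <;> ring
  simp only [WithLp.ofLp_toLp, hcu]
  rw [Fin.sum_univ_three, Fin.sum_univ_four]
  show (u 1 - u 0)^2 + (u 2 - u 0)^2 + (u 3 - u 0)^2 ≤ 2^2 * (u 0^2 + u 1^2 + u 2^2 + u 3^2)
  nlinarith [sq_nonneg (u 0 + u 1 + u 2 + u 3), sq_nonneg (u 1 - u 2), sq_nonneg (u 1 - u 3), sq_nonneg (u 2 - u 3)]

lemma Ctw_bound (w : EuclideanSpace ℝ (Fin 3)) :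
    ‖(WithLp.toLp 2 (Cmatᵀ *ᵥ w))‖ ≤ 2 * ‖w‖ := by
  apply le_of_pow_le_pow_left₀ two_ne_zero (by positivity)
  rw [mul_pow, norm_sq_E, norm_sq_E]
  have hcw : ∀ j : Fin 4, (Cmatᵀ *ᵥ (w : Fin 3 → ℝ)) j
      = Fin.cases (-(w 0 + w 1 + w 2)) (fun j' => w j') j := by
    intro j
    induction j using Fin.cases with
    | zero => simp [Cmat, mulVec, dotProduct, Fin.sum_univ_three]
    | succ j' =>
      simp only [Cmat, transpose_apply, Matrix.of_apply, mulVec, dotProduct,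
        Fin.sum_univ_three, Fin.cases_succ]
      fin_cases j' <;> simp
  simp only [WithLp.ofLp_toLp, hcw]
  rw [Fin.sum_univ_four, Fin.sum_univ_three]
  show (-(w 0 + w 1 + w 2))^2 + (w 0)^2 + (w 1)^2 + (w 2)^2 ≤ 2^2 * ((w 0)^2 + (w 1)^2 + (w 2)^2)
  nlinarith [sq_nonneg (w 0 - w 1), sq_nonneg (w 0 - w 2), sq_nonneg (w 1 - w 2)]









/-- Proposition 1 (single tetrahedron): under the time-step bound
h² < ρ·λ_min(PᵀP)/(24√3·μ), the fixed-force Jacobi iteration M v^{k+1} = f − h²L v^k,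
with M = (ρV/4)·I and L = μV·AᵀA, converges to the unique solution of (M + h²L) v = f. -/
theorem prop1_single_tetrahedron {q0 q1 q2 q3 : Fin 3 → ℝ}
    (hP : IsUnit (Pmat q0 q1 q2 q3).det)
    (hH : ((Pmat q0 q1 q2 q3)ᵀ * Pmat q0 q1 q2 q3).IsHermitian)
    (ρ μ V h : ℝ) (hρ : 0 < ρ) (hμ : 0 < μ) (hV : 0 < V) (hh : 0 < h)
    (hstep : h ^ 2 < ρ * (⨅ i : Fin 3, hH.eigenvalues i) / (24 * Real.sqrt 3 * μ))
    (f v0 : Fin 4 → ℝ) (v : ℕ → Fin 4 → ℝ) (hinit : v 0 = v0)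
    (hiter : ∀ k, ((ρ * V / 4) • (1 : Matrix (Fin 4) (Fin 4) ℝ)) *ᵥ v (k + 1)
        = f - (h ^ 2 • ((μ * V) • ((Amat q0 q1 q2 q3)ᵀ * Amat q0 q1 q2 q3))) *ᵥ v k) :
    ∃ vstar : Fin 4 → ℝ, Tendsto v atTop (𝓝 vstar) ∧
      ((ρ * V / 4) • (1 : Matrix (Fin 4) (Fin 4) ℝ)
          + h ^ 2 • ((μ * V) • ((Amat q0 q1 q2 q3)ᵀ * Amat q0 q1 q2 q3))) *ᵥ vstar = f ∧
      ∀ w : Fin 4 → ℝ,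
        ((ρ * V / 4) • (1 : Matrix (Fin 4) (Fin 4) ℝ)
            + h ^ 2 • ((μ * V) • ((Amat q0 q1 q2 q3)ᵀ * Amat q0 q1 q2 q3))) *ᵥ w = f
          → w = vstar := by
  classical
  set P := Pmat q0 q1 q2 q3 with hPdef
  set lam := ⨅ i : Fin 3, hH.eigenvalues i with hlam
  have hlp : 0 < lam := lam_pos hP hH
  set c : ℝ := ρ * V / 4 with hc
  have hcpos : 0 < c := by positivity
  set B : Matrix (Fin 4) (Fin 4) ℝ :=
    h ^ 2 • ((μ * V) • ((Amat q0 q1 q2 q3)ᵀ * Amat q0 q1 q2 q3)) with hBdef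
  set γ : ℝ := h ^ 2 * (μ * V) with hγ
  have hγpos : 0 < γ := by positivity
  -- bound on B
  have hBu : ∀ u : EuclideanSpace ℝ (Fin 4),
      ‖(WithLp.toLp 2 (B *ᵥ u))‖ ≤ γ * (4 * lam⁻¹) * ‖u‖ := by
    intro u
    have h1 : B *ᵥ (u : Fin 4 → ℝ)
        = γ • (Cmatᵀ *ᵥ ((Pᵀ * P)⁻¹ *ᵥ (Cmat *ᵥ (u : Fin 4 → ℝ)))) := by
      rw [hBdef, smul_mulVec, smul_mulVec, AtA_eq, smul_smul,
        ← mulVec_mulVec, ← mulVec_mulVec]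
    have h2 : (WithLp.toLp 2 (B *ᵥ u))
        = γ • (WithLp.toLp 2 (Cmatᵀ *ᵥ ((Pᵀ * P)⁻¹ *ᵥ (Cmat *ᵥ (u : Fin 4 → ℝ))))) := by rw [h1]; rfl
    rw [h2, norm_smul]
    have hb1 := Ctw_bound (WithLp.toLp 2 ((Pᵀ * P)⁻¹ *ᵥ (Cmat *ᵥ (u : Fin 4 → ℝ))))
    have hb2 := inv_bound hP hH (WithLp.toLp 2 (Cmat *ᵥ (u : Fin 4 → ℝ)))
    have hb3 := Cu_bound u
    have hnγ : ‖γ‖ = γ := Real.norm_of_nonneg hγpos.le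
    rw [hnγ]
    have hnn1 : (0:ℝ) ≤ lam⁻¹ := (inv_pos.mpr hlp).le
    calc γ * ‖(WithLp.toLp 2 (Cmatᵀ *ᵥ ((Pᵀ * P)⁻¹ *ᵥ (Cmat *ᵥ (u : Fin 4 → ℝ)))))‖
        ≤ γ * (2 * ‖(WithLp.toLp 2 ((Pᵀ * P)⁻¹ *ᵥ (Cmat *ᵥ (u : Fin 4 → ℝ))))‖) :=
          by apply mul_le_mul_of_nonneg_left hb1 hγpos.le
      _ ≤ γ * (2 * (lam⁻¹ * ‖(WithLp.toLp 2 (Cmat *ᵥ (u : Fin 4 → ℝ)))‖)) := by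
          apply mul_le_mul_of_nonneg_left _ hγpos.le
          apply mul_le_mul_of_nonneg_left hb2 (by norm_num)
      _ ≤ γ * (2 * (lam⁻¹ * (2 * ‖u‖))) := by
          apply mul_le_mul_of_nonneg_left _ hγpos.le
          apply mul_le_mul_of_nonneg_left _ (by norm_num)
          apply mul_le_mul_of_nonneg_left hb3 hnn1
      _ = γ * (4 * lam⁻¹) * ‖u‖ := by ring
  -- the contraction constant
  set q : ℝ := c⁻¹ * (γ * (4 * lam⁻¹)) with hq
  have hqnn : 0 ≤ q := by positivity
  have hq1 : q < 1 := by
    have hs3 : (1:ℝ) ≤ Real.sqrt 3 := by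
      rw [show (1:ℝ) = Real.sqrt 1 from (Real.sqrt_one).symm]
      exact Real.sqrt_le_sqrt (by norm_num)
    have hd : (0:ℝ) < 24 * Real.sqrt 3 * μ := by positivity
    have hstep' : h ^ 2 * (24 * Real.sqrt 3 * μ) < ρ * lam := by
      rw [← lt_div_iff₀ hd]; exact hstep
    have h16 : h ^ 2 * (16 * μ) < ρ * lam := by nlinarith [sq_nonneg h, hh.le]
    rw [hq, hc, hγ]
    rw [show ((ρ * V / 4 : ℝ))⁻¹ * (h ^ 2 * (μ * V) * (4 * lam⁻¹))
      = (h ^ 2 * (16 * μ)) * (ρ * lam)⁻¹ * (V * V⁻¹) from by field_simp; ring]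
    rw [mul_inv_cancel₀ hV.ne', mul_one]
    rw [← div_eq_mul_inv, div_lt_one (by positivity)]
    exact h16
  -- the iteration map
  set T : EuclideanSpace ℝ (Fin 4) → EuclideanSpace ℝ (Fin 4) :=
    fun u => c⁻¹ • ((WithLp.toLp 2 (f))
      - (WithLp.toLp 2 (B *ᵥ u))) with hT
  have hTdist : ∀ x y : EuclideanSpace ℝ (Fin 4), dist (T x) (T y) ≤ q * dist x y := by
    intro x y
    rw [dist_eq_norm, dist_eq_norm]
    have hsub : (WithLp.toLp 2 (B *ᵥ (y - x)))
        = (WithLp.toLp 2 (B *ᵥ y))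
          - (WithLp.toLp 2 (B *ᵥ x)) := by
      rw [mulVec_sub, WithLp.toLp_sub]
    have hxy : T x - T y = c⁻¹ • (WithLp.toLp 2 (B *ᵥ (y - x))) := by
      simp only [hT, hsub]
      rw [smul_sub, smul_sub, smul_sub]
      abel
    rw [hxy, norm_smul, Real.norm_of_nonneg (by positivity : (0:ℝ) ≤ c⁻¹)]
    calc c⁻¹ * ‖(WithLp.toLp 2 (B *ᵥ (y - x)))‖
        ≤ c⁻¹ * (γ * (4 * lam⁻¹) * ‖y - x‖) := by
          apply mul_le_mul_of_nonneg_left (hBu (y - x)) (by positivity)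
      _ = q * ‖x - y‖ := by rw [norm_sub_rev]; ring
  have hlip : LipschitzWith q.toNNReal T := by
    apply LipschitzWith.of_dist_le_mul
    intro x y
    rw [Real.coe_toNNReal q hqnn]
    exact hTdist x y
  have hcontr : ContractingWith q.toNNReal T := by
    constructor
    · exact_mod_cast (Real.toNNReal_lt_one).mpr hq1
    · exact hlip
  -- iterates
  have hstepT : ∀ k, (WithLp.toLp 2 (v (k+1))) = T (WithLp.toLp 2 (v k)) := by
    intro k
    have h1 := hiter k
    rw [smul_mulVec, one_mulVec] at h1
    show WithLp.toLp 2 (v (k+1)) = WithLp.toLp 2 (c⁻¹ • (f - B *ᵥ v k))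
    congr 1
    rw [← h1, smul_smul, inv_mul_cancel₀ hcpos.ne', one_smul]
  have hvit : ∀ k, (WithLp.toLp 2 (v k))
      = T^[k] (WithLp.toLp 2 (v0)) := by
    intro k
    induction k with
    | zero => exact congrArg (WithLp.toLp 2) hinit
    | succ k ih => rw [Function.iterate_succ_apply', ← ih, hstepT k]
  set xstar := ContractingWith.fixedPoint T hcontr with hxstar
  have hfixpt : T xstar = xstar := hcontr.fixedPoint_isFixedPt
  have hmv : ∀ w : Fin 4 → ℝ, (c • (1 : Matrix (Fin 4) (Fin 4) ℝ) + B) *ᵥ w = c • w + B *ᵥ w := by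
    intro w
    rw [add_mulVec, smul_mulVec, one_mulVec]
  have hiff : ∀ w : Fin 4 → ℝ,
      (T (WithLp.toLp 2 (w)) = (WithLp.toLp 2 (w)))
        ↔ c • w + B *ᵥ w = f := by
    intro w
    constructor
    · intro hw
      have h1 : c⁻¹ • (f - B *ᵥ w) = w := congrArg WithLp.ofLp hw
      have h2 : f - B *ᵥ w = c • w := by
        calc f - B *ᵥ w = c • (c⁻¹ • (f - B *ᵥ w)) := by
              rw [smul_smul, mul_inv_cancel₀ hcpos.ne', one_smul]
          _ = c • w := by rw [h1]
      rw [← h2]; abel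
    · intro hw
      show WithLp.toLp 2 (c⁻¹ • (f - B *ᵥ w)) = WithLp.toLp 2 w
      congr 1
      have h2 : f - B *ᵥ w = c • w := by rw [← hw]; abel
      rw [h2, smul_smul, inv_mul_cancel₀ hcpos.ne', one_smul]
  refine ⟨(xstar : Fin 4 → ℝ), ?_, ?_, ?_⟩
  · -- convergence
    have h1 : Tendsto (fun k => T^[k] (WithLp.toLp 2 (v0))) atTop (𝓝 xstar) :=
      hcontr.tendsto_iterate_fixedPoint _
    have h2 : Tendsto (fun k => (WithLp.toLp 2 (v k))) atTop (𝓝 xstar) := by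
      apply h1.congr
      intro k
      exact (hvit k).symm
    have hcontid : Continuous (@WithLp.ofLp 2 (Fin 4 → ℝ)) := PiLp.continuous_ofLp _ _
    exact (hcontid.tendsto xstar).comp h2
  · rw [hmv]
    exact (hiff (xstar : Fin 4 → ℝ)).mp hfixpt
  · intro w hw
    rw [hmv] at hw
    exact congrArg WithLp.ofLp (hcontr.fixedPoint_unique ((hiff w).mpr hw))
end
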